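/- arXiv:1711.10015 — 8 statements merged into one kernel-verified Lean document; each statement's English description precedes it below -/
import Mathlib

section
/- Let a topological group G act continuously on a Tychonoff space X, and let T be a set of bounded G-uniform functions on X that is invariant under the action (g·f ∈ T for all g ∈ G and f ∈ T, where (g·f)(x) = f(g⁻¹•x)) and separates points and closed sets (for every closed set A ⊆ X and every x ∉ A there is f ∈ T with f(x) ∉ closure(f(A))). Then the initial uniformity U_T on X induced by the maps in T (pulling back the standard uniformity of ℝ) induces the topology of X, is totally bounded, and is an equiuniformity for the action. -/
open Topology TopologicalSpace

universe u

/-- The initial uniformity on `X` induced by a family `T` of real-valued maps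
(pulling back the standard uniformity of `ℝ`). -/
noncomputable def initialUniformity {X : Type u} (T : Set (X → ℝ)) : UniformSpace X :=
  ⨅ f ∈ T, UniformSpace.comap f inferInstance

/-- If a topological group `G` acts continuously on a Tychonoff space `X`
and `T` is an invariant set of bounded `G`-uniform functions separating points and closed
sets, then the initial uniformity `U_T` induces the topology of `X`, is totally bounded,
and is an equiuniformity for the action (all translations are uniformly continuous and the
action is bounded). -/
theorem initialUniformity_is_totallyBounded_equiuniformity
    {G X : Type u} [Group G] [TopologicalSpace G] [IsTopologicalGroup G]
    [TopologicalSpace X] [T35Space X] [MulAction G X] [ContinuousSMul G X]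
    (T : Set (X → ℝ))
    (hcont : ∀ f ∈ T, Continuous f)
    (hbdd : ∀ f ∈ T, ∃ C : ℝ, ∀ x : X, |f x| ≤ C)
    (hGunif : ∀ f ∈ T, ∀ ε : ℝ, 0 < ε → ∃ O ∈ 𝓝 (1 : G),
      ∀ x : X, ∀ g ∈ O, |f x - f (g • x)| < ε)
    (hinv : ∀ g : G, ∀ f ∈ T, (fun x : X => f (g⁻¹ • x)) ∈ T)
    (hsep : ∀ A : Set X, IsClosed A → ∀ x ∉ A, ∃ f ∈ T, f x ∉ closure (f '' A)) :
    (initialUniformity T).toTopologicalSpace = ‹TopologicalSpace X› ∧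
    @TotallyBounded X (initialUniformity T) Set.univ ∧
    (∀ g : G, @UniformContinuous X X (initialUniformity T) (initialUniformity T)
      (fun x : X => g • x)) ∧
    (∀ V ∈ @uniformity X (initialUniformity T), ∃ O ∈ 𝓝 (1 : G),
      ∀ x : X, ∀ g ∈ O, (x, g • x) ∈ V) := by
  have hU : initialUniformity T
      = ⨅ f : T, UniformSpace.comap ((f : X → ℝ)) inferInstance := by
    rw [initialUniformity, iInf_subtype]
  have huni : @uniformity X (initialUniformity T)
      = ⨅ f : T, Filter.comap (Prod.map (f : X → ℝ) (f : X → ℝ)) (uniformity ℝ) := by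
    rw [hU, iInf_uniformity]; rfl
  -- Part 1: the topology induced by the uniformity is the original topology
  have htop : (initialUniformity T).toTopologicalSpace = ‹TopologicalSpace X› := by
    rw [hU, UniformSpace.toTopologicalSpace_iInf]
    have hcomap : ∀ f : T,
        (UniformSpace.comap ((f : X → ℝ)) inferInstance).toTopologicalSpace
          = TopologicalSpace.induced (f : X → ℝ) inferInstance := fun f => rfl
    simp only [hcomap]
    refine le_antisymm ?_ (le_iInf fun f => continuous_iff_le_induced.mp (hcont f f.2))
    rw [TopologicalSpace.le_def]
    intro U hUopen
    have key : ∀ x ∈ U, ∃ W : Set X,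
        IsOpen[⨅ f : T, TopologicalSpace.induced (f : X → ℝ) inferInstance] W ∧
        x ∈ W ∧ W ⊆ U := by
      intro x hx
      obtain ⟨f, hfT, hfx⟩ := hsep Uᶜ (isClosed_compl_iff.mpr hUopen) x (by simpa using hx)
      refine ⟨f ⁻¹' (closure (f '' Uᶜ))ᶜ, ?_, hfx, ?_⟩
      · have h1 : IsOpen[TopologicalSpace.induced f inferInstance]
            (f ⁻¹' (closure (f '' Uᶜ))ᶜ) :=
          ⟨(closure (f '' Uᶜ))ᶜ, isClosed_closure.isOpen_compl, rfl⟩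
        exact h1.mono
          (iInf_le (fun f : T => TopologicalSpace.induced (f : X → ℝ) inferInstance) ⟨f, hfT⟩)
      · intro y hy
        by_contra hyU
        exact hy (subset_closure ⟨y, hyU, rfl⟩)
    choose W hWopen hWmem hWsub using key
    have hUeq : U = ⋃ x : U, W x x.2 :=
      subset_antisymm (fun x hx => Set.mem_iUnion.mpr ⟨⟨x, hx⟩, hWmem x hx⟩)
        (Set.iUnion_subset fun x => hWsub x x.2)
    rw [hUeq]
    exact @isOpen_iUnion X _ (⨅ f : T, TopologicalSpace.induced (f : X → ℝ) inferInstance)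
      _ (fun x : U => hWopen x x.2)
  -- Part 2: totally bounded
  have htb : @TotallyBounded X (initialUniformity T) Set.univ := by
    rw [@totallyBounded_iff_ultrafilter X (initialUniformity T)]
    intro 𝔉 _
    refine ⟨𝔉.neBot', ?_⟩
    rw [huni]
    refine le_iInf fun f => ?_
    rw [← Filter.map_le_iff_le_comap, ← Filter.prod_map_map_eq']
    obtain ⟨C, hC⟩ := hbdd f f.2
    have hmap : ((𝔉 : Filter X).map (f : X → ℝ)) ≤ Filter.principal (Set.Icc (-C) C) := by
      rw [Filter.le_principal_iff, Filter.mem_map]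
      have hpre : ((f : X → ℝ) ⁻¹' Set.Icc (-C) C) = Set.univ := by
        ext x; simpa [Set.mem_Icc] using abs_le.mp (hC x)
      rw [hpre]; exact Filter.univ_mem
    obtain ⟨a, -, ha⟩ := (isCompact_Icc (a := -C) (b := C)).ultrafilter_le_nhds
      (𝔉.map (f : X → ℝ)) (by simpa using hmap)
    haveI : ((𝔉 : Filter X).map (f : X → ℝ)).NeBot := 𝔉.neBot'.map _
    exact ((cauchy_nhds (a := a)).mono (by simpa using ha)).2
  -- Part 3: translations are uniformly continuous
  have htrans : ∀ g : G, @UniformContinuous X X (initialUniformity T) (initialUniformity T)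
      (fun x : X => g • x) := by
    intro g
    rw [hU]
    refine uniformContinuous_iInf_rng.mpr fun f => ?_
    have hmem : (fun x : X => (f : X → ℝ) (g • x)) ∈ T := by
      simpa using hinv g⁻¹ (f : X → ℝ) f.2
    have h1 : @UniformContinuous X ℝ
        (UniformSpace.comap (fun x : X => (f : X → ℝ) (g • x)) inferInstance) _
        (fun x : X => (f : X → ℝ) (g • x)) := uniformContinuous_comap
    exact uniformContinuous_comap'
      (u := ⨅ f : T, UniformSpace.comap ((f : X → ℝ)) inferInstance)
      (uniformContinuous_iInf_dom (i := (⟨_, hmem⟩ : T)) h1)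
  refine ⟨htop, htb, htrans, ?_⟩
  -- Part 4: the action is bounded
  intro V hV
  rw [huni] at hV
  obtain ⟨⟨I, ε⟩, ⟨hIfin, hεpos⟩, hsub⟩ :=
    (Filter.HasBasis.iInf fun f : T =>
      Metric.uniformity_basis_dist.comap (Prod.map (f : X → ℝ) (f : X → ℝ))).mem_iff.mp hV
  haveI := hIfin.to_subtype
  choose O hO hOspec using fun i : I =>
    hGunif ((i : T) : X → ℝ) (i : T).2 (ε i) (hεpos i)
  refine ⟨⋂ i : I, O i, Filter.iInter_mem.mpr hO, ?_⟩
  intro x g hg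
  apply hsub
  refine Set.mem_iInter.mpr fun i => ?_
  have h2 := hOspec i x g (Set.mem_iInter.mp hg i)
  simpa [Real.dist_eq] using h2
end

section
/- Let κ be an infinite cardinal, let G be a κ-narrow topological group acting continuously on a space X, let f : X → ℝ be a bounded G-uniform function, and let T_f = {g·f : g ∈ G} be its orbit, where (g·f)(x) = f(g⁻¹•x). Then the initial pseudouniformity on X induced by the family of maps T_f (generated by the entourages {(x, y) : |h(x) − h(y)| < ε} for h ∈ T_f and ε > 0) has a base of cardinality at most κ. -/
open Topology Pointwise Cardinal
open Uniformity

universe u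

/-- The initial (pseudo)uniformity on `X` induced by a family `T` of real-valued maps
(generated by the entourages `{(x, y) | |h x - h y| < ε}` for `h ∈ T`, `ε > 0`). -/
noncomputable def initialPseudoUniformity {X : Type u} (T : Set (X → ℝ)) : UniformSpace X :=
  ⨅ f ∈ T, UniformSpace.comap f inferInstance

/-- Let `κ` be an infinite cardinal, `G` a `κ`-narrow topological group
acting continuously on `X`, `f : X → ℝ` a bounded `G`-uniform function, and
`T_f = {g·f : g ∈ G}` its orbit (where `(g·f)(x) = f (g⁻¹ • x)`).  Then the initial
pseudouniformity on `X` induced by `T_f` has a base of cardinality at most `κ`. -/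
theorem orbit_pseudoUniformity_hasBase_card_le
    {G X : Type u} [Group G] [TopologicalSpace G] [IsTopologicalGroup G]
    [TopologicalSpace X] [MulAction G X] [ContinuousSMul G X]
    (κ : Cardinal.{u}) (hκ : Cardinal.aleph0 ≤ κ)
    (hnarrow : ∀ O ∈ 𝓝 (1 : G), ∃ S : Set G, #S ≤ κ ∧ S * O = Set.univ)
    (f : X → ℝ) (hfc : Continuous f) (hfb : ∃ C : ℝ, ∀ x : X, |f x| ≤ C)
    (hfu : ∀ ε : ℝ, 0 < ε → ∃ O ∈ 𝓝 (1 : G), ∀ x : X, ∀ g ∈ O, |f x - f (g • x)| < ε) :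
    ∃ B : Set (Set (X × X)), #B ≤ κ ∧
      (∀ b ∈ B, b ∈ @uniformity X
        (initialPseudoUniformity {h : X → ℝ | ∃ g : G, h = fun x => f (g⁻¹ • x)})) ∧
      (∀ V ∈ @uniformity X
        (initialPseudoUniformity {h : X → ℝ | ∃ g : G, h = fun x => f (g⁻¹ • x)}),
        ∃ b ∈ B, b ⊆ V) := by
  classical
  set T := {h : X → ℝ | ∃ g : G, h = fun x => f (g⁻¹ • x)} with hTdef
  -- key: for each n, a small set of "approximating" group elements
  have key : ∀ n : ℕ, ∃ Sn : Set G, #Sn ≤ κ ∧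
      ∀ g : G, ∃ s ∈ Sn, ∀ x : X, |f (g⁻¹ • x) - f (s⁻¹ • x)| < 1 / (n + 1) := by
    intro n
    have hpos : (0 : ℝ) < 1 / (n + 1) := by positivity
    obtain ⟨O, hO, hOp⟩ := hfu _ hpos
    obtain ⟨S, hScard, hSO⟩ := hnarrow (O ∩ O⁻¹) (Filter.inter_mem hO (inv_mem_nhds_one G hO))
    refine ⟨S, hScard, fun g => ?_⟩
    have hg : g ∈ S * (O ∩ O⁻¹) := by rw [hSO]; trivial
    obtain ⟨s, hs, o, ho, rfl⟩ := hg
    refine ⟨s, hs, fun x => ?_⟩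
    have h1 : (s * o)⁻¹ • x = o⁻¹ • (s⁻¹ • x) := by rw [mul_inv_rev, mul_smul]
    have h2 : o⁻¹ ∈ O := ho.2
    have := hOp (s⁻¹ • x) o⁻¹ h2
    rw [h1, abs_sub_comm]
    exact this
  choose Sfun hScard hSkey using key
  -- the full small set
  set S' : Set G := {1} ∪ ⋃ n : ULift.{u} ℕ, Sfun n.down with hS'def
  have hS'card : #S' ≤ κ := by
    refine le_trans (mk_union_le _ _) ?_
    have h1 : #({1} : Set G) ≤ κ := le_trans (by simp) hκ
    have h2 : #(⋃ n : ULift.{u} ℕ, Sfun n.down) ≤ κ := by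
      refine le_trans (mk_iUnion_le _) ?_
      have : #(ULift.{u} ℕ) = Cardinal.aleph0 := by simp
      rw [this]
      calc Cardinal.aleph0 * ⨆ n : ULift.{u} ℕ, #(Sfun n.down)
          ≤ κ * κ := mul_le_mul' hκ (ciSup_le' fun n => hScard n.down)
        _ = κ := mul_eq_self hκ
    calc #({1} : Set G) + #(⋃ n : ULift.{u} ℕ, Sfun n.down) ≤ κ + κ := add_le_add h1 h2
      _ = κ := add_eq_self hκ
  have hmemS' : ∀ n : ℕ, ∀ s ∈ Sfun n, s ∈ S' :=
    fun n s hs => Set.mem_union_right _ (Set.mem_iUnion.2 ⟨⟨n⟩, hs⟩)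
  haveI : Nonempty ↥S' := ⟨⟨1, Set.mem_union_left _ rfl⟩⟩
  -- entourages
  set E : G → ℕ → Set (X × X) :=
    fun s n => {p : X × X | |f (s⁻¹ • p.1) - f (s⁻¹ • p.2)| < 1 / (n + 1)} with hEdef
  set Eset : ↥S' × ℕ → Set (X × X) := fun q => E q.1.1 q.2 with hEsetdef
  -- the uniformity
  have hU : @uniformity X (initialPseudoUniformity T)
      = ⨅ h : T, Filter.comap (Prod.map (h : X → ℝ) (h : X → ℝ)) (𝓤 ℝ) := by
    unfold initialPseudoUniformity
    simp only [iInf_uniformity, uniformity_comap]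
    exact iInf_subtype'' T _ |>.symm
  have hEmem : ∀ (s : G) (n : ℕ), E s n ∈ @uniformity X (initialPseudoUniformity T) := by
    intro s n
    rw [hU]
    have hmem : (fun x => f (s⁻¹ • x)) ∈ T := ⟨s, rfl⟩
    refine Filter.mem_iInf_of_mem ⟨_, hmem⟩ ?_
    refine Filter.mem_comap.2 ⟨{p : ℝ × ℝ | dist p.1 p.2 < 1 / (n + 1)},
      Metric.dist_mem_uniformity (by positivity), ?_⟩
    intro p hp
    simpa [Real.dist_eq, E] using hp
  refine ⟨Set.range (fun A : Finset (↥S' × ℕ) => ⋂ q ∈ A, Eset q), ?_, ?_, ?_⟩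
  · refine le_trans mk_range_le ?_
    haveI : Infinite (↥S' × ℕ) := Prod.infinite_of_right
    rw [mk_finset_of_infinite]
    rw [mk_prod]
    have : Cardinal.lift.{0} #↥S' * Cardinal.lift.{u} #ℕ ≤ κ * κ := by
      refine mul_le_mul' (by simpa using hS'card) (by simp [hκ])
    exact le_trans this (le_of_eq (mul_eq_self hκ))
  · rintro b ⟨A, rfl⟩
    exact (Filter.biInter_finset_mem A).2 fun q _ => hEmem q.1.1 q.2
  · intro V hV
    rw [hU] at hV
    obtain ⟨I, Ifin, W, hW, rfl⟩ := Filter.mem_iInf.1 hV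
    haveI := Ifin.fintype
    -- for each i, extract an index n and then a good pair (s, m)
    have step : ∀ i : I, ∃ q : ↥S' × ℕ, Eset q ⊆ W i := by
      intro i
      have hWi := hW i
      obtain ⟨n, -, hn⟩ :=
        ((Metric.uniformity_basis_dist_inv_nat_succ.comap
          (Prod.map ((i : T) : X → ℝ) ((i : T) : X → ℝ))).mem_iff).1 hWi
      obtain ⟨g, hg⟩ := (i : T).2
      obtain ⟨s, hsmem, hs⟩ := hSkey (3 * n + 2) g
      refine ⟨⟨⟨s, hmemS' _ s hsmem⟩, 3 * n + 2⟩, ?_⟩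
      intro p hp
      apply hn
      simp only [Set.mem_preimage, Prod.map_apply, Real.dist_eq, Set.mem_setOf_eq, hg]
      have e1 := hs p.1
      have e2 := hs p.2
      have e3 : |f (s⁻¹ • p.1) - f (s⁻¹ • p.2)| < 1 / ((3 * n + 2 : ℕ) + 1) := hp
      have harith : (1 : ℝ) / ((3 * n + 2 : ℕ) + 1) = 1 / (3 * ((n : ℝ) + 1)) := by
        congr 1; push_cast; ring
      calc |f (g⁻¹ • p.1) - f (g⁻¹ • p.2)|
          ≤ |f (g⁻¹ • p.1) - f (s⁻¹ • p.1)| + |f (s⁻¹ • p.1) - f (s⁻¹ • p.2)|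
            + |f (s⁻¹ • p.2) - f (g⁻¹ • p.2)| := by
            have := abs_sub_le (f (g⁻¹ • p.1)) (f (s⁻¹ • p.1)) (f (g⁻¹ • p.2))
            have h2 := abs_sub_le (f (s⁻¹ • p.1)) (f (s⁻¹ • p.2)) (f (g⁻¹ • p.2))
            linarith
        _ < 1 / (3 * ((n : ℝ) + 1)) + 1 / (3 * ((n : ℝ) + 1)) + 1 / (3 * ((n : ℝ) + 1)) := by
            rw [harith] at e1 e2 e3
            have e2' : |f (s⁻¹ • p.2) - f (g⁻¹ • p.2)| < 1 / (3 * ((n : ℝ) + 1)) := by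
              rw [abs_sub_comm]; exact e2
            exact add_lt_add (add_lt_add e1 e3) e2'
        _ = 1 / ((n : ℝ) + 1) := by
            have hne : ((n : ℝ) + 1) ≠ 0 := by positivity
            field_simp
            norm_num
    choose φ hφ using step
    refine ⟨⋂ q ∈ Finset.image φ Finset.univ, Eset q, ⟨_, rfl⟩, ?_⟩
    intro p hp
    simp only [Set.mem_iInter] at hp ⊢
    intro i
    exact hφ i (hp (φ i) (Finset.mem_image_of_mem φ (Finset.mem_univ i)))
end

section
/- Let κ be an infinite cardinal, let G be a κ-narrow topological group, and let X be a G-Tychonoff G-space whose topology has a basis of cardinality at most κ. Then there exist a compact Hausdorff space B with a continuous G-action whose topology has a basis of cardinality at most κ, and a topological embedding f : X → B which is equivariant, i.e. f(g•x) = g•f(x) for all g ∈ G and x ∈ X. -/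
open Topology TopologicalSpace Pointwise Cardinal

universe u

set_option linter.unusedSectionVars false
set_option maxHeartbeats 1000000

section Aux

variable {G : Type u} [Group G] [TopologicalSpace G] [IsTopologicalGroup G]
variable {C : Type u} [TopologicalSpace C] [CompactSpace C] [T2Space C]
variable [MulAction G C] [ContinuousSMul G C]

/-- The continuous family of maps `c ↦ g⁻¹ • c`, as a continuous map into `C(C,C)`. -/
noncomputable def actMap (G C : Type u) [Group G] [TopologicalSpace G] [IsTopologicalGroup G]
    [TopologicalSpace C] [MulAction G C] [ContinuousSMul G C] : C(G, C(C, C)) :=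
  ContinuousMap.curry ⟨fun p => p.1⁻¹ • p.2, by fun_prop⟩

/-- The translate of `f` by `g` : `c ↦ f (g⁻¹ • c)`. -/
noncomputable def trP (f : C(C, ℝ)) (g : G) : C(C, ℝ) :=
  f.comp (actMap G C g)

lemma trP_apply (f : C(C, ℝ)) (g : G) (c : C) : trP f g c = f (g⁻¹ • c) := rfl

lemma trP_one (f : C(C, ℝ)) : trP f (1 : G) = f := by
  ext c; simp [trP_apply]

lemma trP_trP (f : C(C, ℝ)) (t k : G) : trP (trP f t) k = trP f (k * t) := by
  ext c; simp [trP_apply, mul_smul]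

lemma continuous_trP (f : C(C, ℝ)) : Continuous (trP (C := C) (G := G) f) :=
  (ContinuousMap.continuous_postcomp f).comp (actMap G C).continuous

lemma dist_trP_mul (f : C(C, ℝ)) (s o : G) :
    dist (trP f (s * o)) (trP f s) ≤ dist (trP f o) f := by
  rw [ContinuousMap.dist_le dist_nonneg]
  intro c
  have h := ContinuousMap.dist_apply_le_dist (f := trP f o) (g := f) (s⁻¹ • c)
  simpa [trP_apply, mul_smul] using h

end Aux

section Pi

/-- A product of at most `κ` copies of `ℝ` has a basis of cardinality at most `κ`. -/
lemma basis_card_pi (ι : Type u) (κ : Cardinal.{u}) (hκ : Cardinal.aleph0 ≤ κ)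
    (hι : #ι ≤ κ) :
    ∃ T : Set (Set (ι → ℝ)), #T ≤ κ ∧ IsTopologicalBasis T := by
  obtain ⟨bR, hbRc, -, hbR⟩ := exists_countable_basis ℝ
  haveI : Countable bR := hbRc.to_subtype
  refine ⟨{S | ∃ (U : ι → Set ℝ) (F : Finset ι), (∀ i ∈ F, U i ∈ bR) ∧ S = (↑F : Set ι).pi U},
    ?_, isTopologicalBasis_pi fun _ => hbR⟩
  -- the map realizing every basic set
  classical
  let τ : (Σ F : Finset ι, (∀ _ : ↥F, ↥bR)) → Set (ι → ℝ) :=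
    fun q => {x | ∀ i (h : i ∈ q.1), x i ∈ (q.2 ⟨i, h⟩ : Set ℝ)}
  have hsub : {S | ∃ (U : ι → Set ℝ) (F : Finset ι), (∀ i ∈ F, U i ∈ bR) ∧ S = (↑F : Set ι).pi U}
      ⊆ Set.range τ := by
    rintro S ⟨U, F, hU, rfl⟩
    refine ⟨⟨F, fun i => ⟨U i.1, hU i.1 i.2⟩⟩, ?_⟩
    ext x
    simp only [τ, Set.mem_setOf_eq, Set.mem_pi, Finset.mem_coe]
  have h1 : #{S | ∃ (U : ι → Set ℝ) (F : Finset ι), (∀ i ∈ F, U i ∈ bR) ∧ S = (↑F : Set ι).pi U}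
      ≤ #(Σ F : Finset ι, (∀ _ : ↥F, ↥bR)) :=
    le_trans (Cardinal.mk_le_mk_of_subset hsub) Cardinal.mk_range_le
  refine le_trans h1 ?_
  have h2 : #(Σ F : Finset ι, (∀ _ : ↥F, ↥bR)) ≤ #(Finset ι) * Cardinal.aleph0 := by
    rw [Cardinal.mk_sigma]
    refine le_trans (Cardinal.sum_le_sum _ (fun _ => Cardinal.aleph0) ?_) ?_
    · intro F
      exact Cardinal.mk_le_aleph0
    · rw [Cardinal.sum_const']
  refine le_trans h2 ?_
  have hfin : #(Finset ι) ≤ κ := by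
    have hinj : Function.Injective (fun F : Finset ι => F.1.toList) := by
      intro F1 F2 h
      have h2 : ((F1.1.toList : List ι) : Multiset ι) = ((F2.1.toList : List ι) : Multiset ι) :=
        congrArg _ h
      rw [Multiset.coe_toList, Multiset.coe_toList] at h2
      exact Finset.val_injective h2
    refine le_trans (Cardinal.mk_le_of_injective hinj) ?_
    exact le_trans (Cardinal.mk_list_le_max ι) (max_le hκ hι)
  calc #(Finset ι) * Cardinal.aleph0 ≤ κ * κ := mul_le_mul' hfin hκ
    _ = κ := Cardinal.mul_eq_self hκ

end Pi

section Quot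

variable {G : Type u} [Group G] [TopologicalSpace G] [IsTopologicalGroup G]
variable {C : Type u} [TopologicalSpace C] [CompactSpace C] [T2Space C]
variable [MulAction G C] [ContinuousSMul G C]
variable (D : Set C(C, ℝ))

/-- The setoid identifying points not separated by the family `D`. -/
def qSetoid : Setoid C :=
  ⟨fun x y => ∀ f ∈ D, f x = f y,
   ⟨fun _ _ _ => rfl,
    fun h f hf => (h f hf).symm,
    fun h1 h2 f hf => (h1 f hf).trans (h2 f hf)⟩⟩

lemma qSetoid_r {x y : C} : (qSetoid D).r x y ↔ ∀ f ∈ D, f x = f y := Iff.rfl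

lemma qconst {k : C(C, ℝ)} (hk : k ∈ closure D) {x y : C} (h : (qSetoid D).r x y) :
    k x = k y := by
  have hcl : closure D ⊆ {k' : C(C, ℝ) | k' x = k' y} :=
    closure_minimal (fun f hf => h f hf)
      (isClosed_eq (ContinuousEvalConst.continuous_eval_const x)
        (ContinuousEvalConst.continuous_eval_const y))
  exact hcl hk

lemma qmk_cont : Continuous (Quotient.mk (qSetoid D)) := continuous_quot_mk

/-- The action descends to the quotient. -/
noncomputable def qSmul (hD : ∀ f ∈ D, ∀ k : G, trP f k ∈ closure D) (g : G) :
    Quotient (qSetoid D) → Quotient (qSetoid D) :=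
  Quotient.map (fun c => g • c) (fun x y h f hf => by
    have h2 := qconst D (hD f hf g⁻¹) h
    simpa [trP_apply] using h2)

noncomputable def qAct (hD : ∀ f ∈ D, ∀ k : G, trP f k ∈ closure D) :
    MulAction G (Quotient (qSetoid D)) where
  smul g := qSmul D hD g
  one_smul b := Quotient.inductionOn b fun c => by
    show Quotient.mk _ ((1 : G) • c) = Quotient.mk _ c
    rw [one_smul]
  mul_smul g h b := Quotient.inductionOn b fun c => by
    show Quotient.mk _ ((g * h) • c) = Quotient.mk _ (g • h • c)
    rw [mul_smul]

/-- The canonical map to the product. -/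
noncomputable def qPsi : Quotient (qSetoid D) → (↥D → ℝ) :=
  fun b f => Quotient.lift (s := qSetoid D) (⇑f.1) (fun _ _ h => h f.1 f.2) b

lemma qPsi_cont : Continuous (qPsi D) :=
  continuous_pi fun f => (map_continuous f.1).quotient_lift _

lemma qPsi_inj : Function.Injective (qPsi D) := by
  intro b1 b2 h
  induction b1 using Quotient.inductionOn with | _ x =>
  induction b2 using Quotient.inductionOn with | _ y =>
  exact Quotient.sound (fun f hf => (congrFun h ⟨f, hf⟩ : f x = f y))

lemma qPsi_closedEmb : IsClosedEmbedding (qPsi D) :=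
  (qPsi_cont D).isClosedEmbedding (qPsi_inj D)

lemma qT2 : T2Space (Quotient (qSetoid D)) :=
  (qPsi_closedEmb D).toIsEmbedding.t2Space

/-- The lift of a function in the closure of `D`. -/
noncomputable def qLift (k : C(C, ℝ)) (hk : k ∈ closure D) : Quotient (qSetoid D) → ℝ :=
  Quotient.lift (⇑k) (fun _ _ h => qconst D hk h)

lemma qLift_cont (k : C(C, ℝ)) (hk : k ∈ closure D) : Continuous (qLift D k hk) :=
  (map_continuous k).quotient_lift _

lemma qLift_mk (k : C(C, ℝ)) (hk : k ∈ closure D) (c : C) :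
    qLift D k hk (Quotient.mk _ c) = k c := rfl

lemma qSmul_cont (hD : ∀ f ∈ D, ∀ k : G, trP f k ∈ closure D) :
    Continuous (fun p : G × Quotient (qSetoid D) => qSmul D hD p.1 p.2) := by
  rw [(qPsi_closedEmb D).toIsEmbedding.toIsInducing.continuous_iff]
  refine continuous_pi fun f => ?_
  have key : ∀ (g : G) (b : Quotient (qSetoid D)),
      qPsi D (qSmul D hD g b) f = qLift D (trP f.1 g⁻¹) (hD f.1 f.2 g⁻¹) b := by
    intro g b
    induction b using Quotient.inductionOn with | _ c =>
    show f.1 (g • c) = trP f.1 g⁻¹ c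
    simp [trP_apply]
  have heq : (fun p : G × Quotient (qSetoid D) => qPsi D (qSmul D hD p.1 p.2) f)
      = fun p => qLift D (trP f.1 p.1⁻¹) (hD f.1 f.2 p.1⁻¹) p.2 := by
    funext p
    exact key p.1 p.2
  show Continuous fun p : G × Quotient (qSetoid D) => qPsi D (qSmul D hD p.1 p.2) f
  rw [heq]
  rw [continuous_iff_continuousAt]
  rintro ⟨g₀, b₀⟩
  have hcg : Continuous fun g : G => trP (C := C) f.1 g⁻¹ :=
    (continuous_trP f.1).comp continuous_inv
  rw [ContinuousAt, Metric.tendsto_nhds]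
  intro ε hε
  have hW : {g : G | dist (trP f.1 g⁻¹) (trP f.1 g₀⁻¹) < ε / 2} ∈ 𝓝 g₀ := by
    refine (isOpen_Iio.preimage (hcg.dist continuous_const)).mem_nhds ?_
    simp [half_pos hε]
  have hLc : Continuous (qLift D (trP f.1 g₀⁻¹) (hD f.1 f.2 g₀⁻¹)) := qLift_cont D _ _
  have hV : {b | dist (qLift D (trP f.1 g₀⁻¹) (hD f.1 f.2 g₀⁻¹) b)
      (qLift D (trP f.1 g₀⁻¹) (hD f.1 f.2 g₀⁻¹) b₀) < ε / 2} ∈ 𝓝 b₀ := by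
    refine (isOpen_Iio.preimage ((hLc.dist continuous_const))).mem_nhds ?_
    simp [half_pos hε]
  rw [nhds_prod_eq]
  filter_upwards [Filter.prod_mem_prod hW hV]
  rintro ⟨g, b⟩ ⟨hg, hb⟩
  induction b using Quotient.inductionOn with | _ c =>
  have h1 : dist (trP f.1 g⁻¹ c) (trP f.1 g₀⁻¹ c) ≤ dist (trP f.1 g⁻¹) (trP f.1 g₀⁻¹) :=
    ContinuousMap.dist_apply_le_dist c
  have hb' : dist (trP f.1 g₀⁻¹ c)
      (qLift D (trP f.1 g₀⁻¹) (hD f.1 f.2 g₀⁻¹) b₀) < ε / 2 := hb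
  calc dist (qLift D (trP f.1 g⁻¹) (hD f.1 f.2 g⁻¹) (Quotient.mk _ c))
        (qLift D (trP f.1 g₀⁻¹) (hD f.1 f.2 g₀⁻¹) b₀)
      ≤ dist (trP f.1 g⁻¹ c) (trP f.1 g₀⁻¹ c)
        + dist (trP f.1 g₀⁻¹ c) (qLift D (trP f.1 g₀⁻¹) (hD f.1 f.2 g₀⁻¹) b₀) :=
        dist_triangle _ _ _
    _ < ε / 2 + ε / 2 := add_lt_add (lt_of_le_of_lt h1 hg) hb'
    _ = ε := add_halves ε

lemma qBasis (κ : Cardinal.{u}) (hκ : Cardinal.aleph0 ≤ κ) (hD : #D ≤ κ) :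
    ∃ T : Set (Set (Quotient (qSetoid D))), #T ≤ κ ∧ IsTopologicalBasis T := by
  obtain ⟨T, hTcard, hTbasis⟩ := basis_card_pi (↥D) κ hκ hD
  exact ⟨Set.preimage (qPsi D) '' T, le_trans Cardinal.mk_image_le hTcard,
    TopologicalSpace.IsTopologicalBasis.isInducing (qPsi_closedEmb D).toIsInducing hTbasis⟩

end Quot

/-- A `G`-space `X` is `G`-Tychonoff if it admits an equivariant dense topological embedding
into a compact Hausdorff `G`-space. -/
def IsGTychonoff (G X : Type u) [Group G] [TopologicalSpace G] [TopologicalSpace X]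
    [MulAction G X] : Prop :=
  ∃ (C : Type u) (_ : TopologicalSpace C) (_ : MulAction G C),
    CompactSpace C ∧ T2Space C ∧ ContinuousSMul G C ∧
    ∃ j : X → C, IsEmbedding j ∧ DenseRange j ∧ ∀ (g : G) (x : X), j (g • x) = g • j x

/-- Let `κ` be an infinite cardinal, `G` a `κ`-narrow topological group and
`X` a `G`-Tychonoff `G`-space with a basis of cardinality at most `κ`.  Then there is a
compact Hausdorff `G`-space `B` with a basis of cardinality at most `κ` and an equivariant
topological embedding `f : X → B`. -/
theorem exists_equivariant_compactification_of_narrow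
    {G X : Type u} [Group G] [TopologicalSpace G] [IsTopologicalGroup G]
    [TopologicalSpace X] [MulAction G X] [ContinuousSMul G X]
    (κ : Cardinal.{u}) (hκ : Cardinal.aleph0 ≤ κ)
    (hnarrow : ∀ O ∈ 𝓝 (1 : G), ∃ S : Set G, #S ≤ κ ∧ S * O = Set.univ)
    (hTych : IsGTychonoff G X)
    (hbasis : ∃ S : Set (Set X), #S ≤ κ ∧ IsTopologicalBasis S) :
    ∃ (B : Type u) (_ : TopologicalSpace B) (_ : MulAction G B),
      CompactSpace B ∧ T2Space B ∧ ContinuousSMul G B ∧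
      (∃ S : Set (Set B), #S ≤ κ ∧ IsTopologicalBasis S) ∧
      ∃ f : X → B, IsEmbedding f ∧ ∀ (g : G) (x : X), f (g • x) = g • f x := by
  classical
  obtain ⟨C, tC, MC, hcomp, ht2, hsC, j, hjemb, hjdense, hjequiv⟩ := hTych
  haveI := hcomp; haveI := ht2; haveI := hsC
  obtain ⟨S, hScard, hSbasis⟩ := hbasis
  haveI : T2Space X := hjemb.t2Space
  -- the separating functions indexed by pairs of basis elements
  set I := (↥S × ↥S) with hIdef
  let Q : I → Prop := fun p => ∃ f : C(C, ℝ),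
      (∀ x ∈ (p.1 : Set X), f (j x) = 0) ∧ (∀ x, x ∉ (p.2 : Set X) → f (j x) = 1)
  let φ : I → C(C, ℝ) := fun p => if h : Q p then h.choose else 1
  have hφ : ∀ p, Q p → (∀ x ∈ (p.1 : Set X), φ p (j x) = 0) ∧
      (∀ x, x ∉ (p.2 : Set X) → φ p (j x) = 1) := by
    intro p h
    simp only [φ, dif_pos h]
    exact h.choose_spec
  -- key existence of separating functions
  have hexist : ∀ V, ∀ hV : V ∈ S, ∀ x ∈ V, ∃ p : I,
      φ p (j x) = 0 ∧ ∀ y, y ∉ V → φ p (j y) = 1 := by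
    intro V hV x hxV
    obtain ⟨W, hWopen, hWpre⟩ := hjemb.toIsInducing.isOpen_iff.mp (hSbasis.isOpen hV)
    have hjxW : j x ∈ W := by
      have : x ∈ j ⁻¹' W := by rw [hWpre]; exact hxV
      exact this
    obtain ⟨f₀, hf₀0, hf₀1, -⟩ := exists_continuous_zero_one_of_isClosed
      (isClosed_singleton (x := j x)) hWopen.isClosed_compl
      (Set.disjoint_singleton_left.mpr (by simpa using hjxW))
    have hNopen : IsOpen {y : X | f₀ (j y) < 1/2} :=
      isOpen_Iio.preimage ((map_continuous f₀).comp hjemb.continuous)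
    have hxN : x ∈ {y : X | f₀ (j y) < 1/2} := by
      have h0 : f₀ (j x) = 0 := hf₀0 rfl
      simp only [Set.mem_setOf_eq, h0]
      norm_num
    obtain ⟨U, hUS, hxU, hUN⟩ := hSbasis.exists_subset_of_mem_open hxN hNopen
    have hQ : Q (⟨U, hUS⟩, ⟨V, hV⟩) := by
      refine ⟨⟨fun c => min 1 (max 0 (2 * f₀ c - 1)), by fun_prop⟩, ?_, ?_⟩
      · intro z hz
        have h2 : f₀ (j z) < 1/2 := hUN hz
        simp only [ContinuousMap.coe_mk]
        have h3 : 2 * f₀ (j z) - 1 ≤ 0 := by linarith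
        rw [max_eq_left h3, min_eq_right zero_le_one]
      · intro z hz
        have hjz : j z ∈ Wᶜ := by
          intro hWm
          have hzw : z ∈ j ⁻¹' W := hWm
          rw [hWpre] at hzw
          exact hz hzw
        have h1 : f₀ (j z) = 1 := hf₀1 hjz
        simp only [ContinuousMap.coe_mk, h1]
        norm_num
    obtain ⟨h0, h1⟩ := hφ _ hQ
    exact ⟨(⟨U, hUS⟩, ⟨V, hV⟩), h0 x hxU, h1⟩
  -- narrowness choices
  have hOnhds : ∀ (p : I) (n : ℕ),
      trP (φ p) ⁻¹' Metric.ball (φ p) (1 / (n + 1)) ∈ 𝓝 (1 : G) := by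
    intro p n
    refine (Metric.isOpen_ball.preimage (continuous_trP (φ p))).mem_nhds ?_
    simp only [Set.mem_preimage, trP_one, Metric.mem_ball, dist_self]
    positivity
  choose Sg hSgcard hSgcover using fun (p : I) (n : ℕ) => hnarrow _ (hOnhds p n)
  let T : I → Set G := fun p => {1} ∪ ⋃ n : ULift.{u} ℕ, Sg p n.down
  let D : Set C(C, ℝ) := ⋃ p : I, trP (φ p) '' T p
  have hmemD : ∀ p : I, φ p ∈ D := fun p =>
    Set.mem_iUnion.2 ⟨p, ⟨1, Or.inl rfl, trP_one _⟩⟩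
  have horb : ∀ (p : I) (g : G), trP (φ p) g ∈ closure D := by
    intro p g
    rw [Metric.mem_closure_iff]
    intro ε hε
    obtain ⟨n, hn⟩ := exists_nat_one_div_lt hε
    have hg : g ∈ Sg p n * (trP (φ p) ⁻¹' Metric.ball (φ p) (1 / (n + 1))) := by
      rw [hSgcover p n]; trivial
    obtain ⟨s, hs, o, ho, rfl⟩ := Set.mem_mul.mp hg
    refine ⟨trP (φ p) s, ?_, ?_⟩
    · exact Set.mem_iUnion.2 ⟨p, ⟨s, Or.inr (Set.mem_iUnion.2 ⟨⟨n⟩, hs⟩), rfl⟩⟩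
    · have ho' : dist (trP (φ p) o) (φ p) < 1 / (n + 1) := ho
      calc dist (trP (φ p) (s * o)) (trP (φ p) s) ≤ dist (trP (φ p) o) (φ p) :=
            dist_trP_mul (φ p) s o
        _ < 1 / (n + 1) := ho'
        _ < ε := hn
  have hDorb : ∀ f ∈ D, ∀ k : G, trP f k ∈ closure D := by
    intro f hf k
    obtain ⟨p, hp⟩ := Set.mem_iUnion.1 hf
    obtain ⟨t, ht, rfl⟩ := hp
    rw [trP_trP]
    exact horb p _
  -- cardinalities
  have hI : #I ≤ κ := by
    calc #I = Cardinal.lift.{u, u} #↥S * Cardinal.lift.{u, u} #↥S := Cardinal.mk_prod _ _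
      _ = #↥S * #↥S := by simp
      _ ≤ κ * κ := mul_le_mul' hScard hScard
      _ = κ := Cardinal.mul_eq_self hκ
  have hTcard : ∀ p : I, #(T p) ≤ κ := by
    intro p
    refine le_trans (Cardinal.mk_union_le _ _) (Cardinal.add_le_of_le hκ ?_ ?_)
    · exact le_trans (le_of_eq (Cardinal.mk_singleton _)) (le_trans Cardinal.one_le_aleph0 hκ)
    · refine le_trans (Cardinal.mk_iUnion_le _) ?_
      have hsup : ⨆ n : ULift.{u} ℕ, #(Sg p n.down) ≤ κ := ciSup_le' fun n => hSgcard p n.down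
      have hN : #(ULift.{u} ℕ) ≤ κ := le_trans Cardinal.mk_le_aleph0 hκ
      exact le_trans (mul_le_mul' hN hsup) (le_of_eq (Cardinal.mul_eq_self hκ))
  have hDcard : #D ≤ κ := by
    refine le_trans (Cardinal.mk_iUnion_le _) ?_
    refine le_trans (mul_le_mul' hI (ciSup_le' fun p =>
      le_trans Cardinal.mk_image_le (hTcard p))) (le_of_eq (Cardinal.mul_eq_self hκ))
  -- assemble
  haveI : T2Space (Quotient (qSetoid D)) := qT2 D
  letI MB : MulAction G (Quotient (qSetoid D)) := qAct D hDorb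
  refine ⟨Quotient (qSetoid D), inferInstance, MB, Quotient.compactSpace,
    qT2 D, ⟨qSmul_cont D hDorb⟩, qBasis D κ hκ hDcard,
    fun x => Quotient.mk _ (j x), ⟨?_, ?_⟩, ?_⟩
  · -- inducing
    have hcont : Continuous (fun x : X => Quotient.mk (qSetoid D) (j x)) :=
      (qmk_cont D).comp hjemb.continuous
    rw [isInducing_iff_nhds]
    intro x
    refine le_antisymm ((hcont.tendsto x).le_comap) ?_
    intro V hV
    obtain ⟨V', hV'sub, hV'open, hxV'⟩ := mem_nhds_iff.mp hV
    obtain ⟨V₂, hV₂S, hxV₂, hV₂sub⟩ := hSbasis.exists_subset_of_mem_open hxV' hV'open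
    obtain ⟨p, hp0, hp1⟩ := hexist V₂ hV₂S x hxV₂
    have hφD : φ p ∈ closure D := subset_closure (hmemD p)
    refine Filter.mem_comap.mpr ⟨qLift D (φ p) hφD ⁻¹' Set.Iio (1/2), ?_, ?_⟩
    · refine (isOpen_Iio.preimage (qLift_cont D _ hφD)).mem_nhds ?_
      show qLift D (φ p) hφD (Quotient.mk _ (j x)) ∈ Set.Iio (1/2 : ℝ)
      rw [qLift_mk, hp0]
      norm_num
    · intro y hy
      have hy' : φ p (j y) < 1/2 := hy
      by_contra hyV
      have := hp1 y (fun h => hyV (hV'sub (hV₂sub h)))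
      rw [this] at hy'
      norm_num at hy'
  · -- injective
    intro x y hxy
    by_contra hne
    obtain ⟨V, hVS, hxV, hyV⟩ : ∃ V ∈ S, x ∈ V ∧ y ∉ V := by
      have hx : x ∈ ({y}ᶜ : Set X) := by simpa using hne
      obtain ⟨V, hV, hxV, hsub⟩ := hSbasis.exists_subset_of_mem_open hx isOpen_compl_singleton
      exact ⟨V, hV, hxV, fun hy => hsub hy rfl⟩
    obtain ⟨p, hp0, hp1⟩ := hexist V hVS x hxV
    have hequiv : ∀ f ∈ D, f (j x) = f (j y) := Quotient.exact hxy
    have h01 := hequiv (φ p) (hmemD p)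
    rw [hp0, hp1 y hyV] at h01
    exact zero_ne_one h01
  · -- equivariance
    intro g x
    show Quotient.mk (qSetoid D) (j (g • x)) = qSmul D hDorb g (Quotient.mk _ (j x))
    rw [hjequiv]
    rfl
end

section
/- Let (X, U) be a uniform space and let G be a group of homeomorphisms of X (under composition) each of whose elements is uniformly continuous. Then G, endowed with the topology induced by the uniformity of uniform convergence on maps X → X, is a topological group. -/
open Topology Filter Uniformity UniformConvergence

universe u

/-- The group of self-homeomorphisms of a topological space, under composition. -/
instance homeomorphGroup {X : Type u} [TopologicalSpace X] : Group (X ≃ₜ X) where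
  mul f g := g.trans f
  one := Homeomorph.refl X
  inv := Homeomorph.symm
  mul_assoc _ _ _ := Homeomorph.ext fun _ => rfl
  one_mul _ := Homeomorph.ext fun _ => rfl
  mul_one _ := Homeomorph.ext fun _ => rfl
  inv_mul_cancel f := Homeomorph.ext fun x => f.symm_apply_apply x

/-- Let `(X, U)` be a uniform space and `G` a group of homeomorphisms of
`X` each of whose elements is uniformly continuous.  Then `G`, endowed with the topology
induced by the uniformity of uniform convergence, is a topological group. -/
theorem topologicalGroup_of_uniformlyContinuous_homeomorphisms
    {X : Type u} [UniformSpace X] (G : Subgroup (X ≃ₜ X))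
    (hG : ∀ g ∈ G, UniformContinuous ⇑g) :
    @IsTopologicalGroup G
      (TopologicalSpace.induced (fun g : G => UniformFun.ofFun ⇑(g : X ≃ₜ X)) inferInstance)
      _ := by
  letI T : TopologicalSpace G :=
    .induced (fun g : G => UniformFun.ofFun ⇑(g : X ≃ₜ X)) inferInstance
  set ι : G → (X →ᵤ X) := fun g => UniformFun.ofFun ⇑(g : X ≃ₜ X) with hι
  have hmul : Continuous fun p : G × G => p.1 * p.2 := by
    apply continuous_induced_rng.2
    rw [continuous_iff_continuousAt]
    rintro ⟨g₀, h₀⟩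
    rw [ContinuousAt, (UniformFun.hasBasis_nhds X X _).tendsto_right_iff]
    intro V hV
    obtain ⟨V', hV', hVV⟩ := comp_mem_uniformity_sets hV
    have hW : (fun p : X × X => ((g₀ : X ≃ₜ X) p.1, (g₀ : X ≃ₜ X) p.2)) ⁻¹' V' ∈ 𝓤 X :=
      hG _ g₀.2 hV'
    have hA : ι ⁻¹' { u | (ι g₀, u) ∈ UniformFun.gen X X V' } ∈ 𝓝 g₀ := by
      rw [nhds_induced]
      exact preimage_mem_comap ((UniformFun.hasBasis_nhds X X _).mem_of_mem hV')
    have hB : ι ⁻¹' { u | (ι h₀, u) ∈ UniformFun.gen X X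
        ((fun p : X × X => ((g₀ : X ≃ₜ X) p.1, (g₀ : X ≃ₜ X) p.2)) ⁻¹' V') } ∈ 𝓝 h₀ := by
      rw [nhds_induced]
      exact preimage_mem_comap ((UniformFun.hasBasis_nhds X X _).mem_of_mem hW)
    filter_upwards [prod_mem_nhds hA hB] with p hp
    intro x
    obtain ⟨hp1, hp2⟩ := hp
    exact hVV ⟨(g₀ : X ≃ₜ X) ((p.2 : X ≃ₜ X) x), hp2 x, hp1 _⟩
  have hinv : Continuous fun g : G => g⁻¹ := by
    apply continuous_induced_rng.2
    rw [continuous_iff_continuousAt]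
    intro g₀
    rw [ContinuousAt, (UniformFun.hasBasis_nhds X X _).tendsto_right_iff]
    intro V hV
    -- W₁ : entourage from uniform continuity of g₀⁻¹
    have hW₁ : (fun p : X × X => (((g₀⁻¹ : G) : X ≃ₜ X) p.1, ((g₀⁻¹ : G) : X ≃ₜ X) p.2)) ⁻¹' V
        ∈ 𝓤 X := hG _ (g₀⁻¹ : G).2 hV
    set W₁ := (fun p : X × X => (((g₀⁻¹ : G) : X ≃ₜ X) p.1, ((g₀⁻¹ : G) : X ≃ₜ X) p.2)) ⁻¹' V
      with hW₁def
    have hW : Prod.swap ⁻¹' W₁ ∈ 𝓤 X := tendsto_swap_uniformity hW₁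
    have hA : ι ⁻¹' { u | (ι g₀, u) ∈ UniformFun.gen X X (Prod.swap ⁻¹' W₁) } ∈ 𝓝 g₀ := by
      rw [nhds_induced]
      exact preimage_mem_comap ((UniformFun.hasBasis_nhds X X _).mem_of_mem hW)
    filter_upwards [hA] with g hg
    intro x
    have h1 : ((g : X ≃ₜ X) (((g⁻¹ : G) : X ≃ₜ X) x), (g₀ : X ≃ₜ X) (((g⁻¹ : G) : X ≃ₜ X) x))
        ∈ W₁ := hg (((g⁻¹ : G) : X ≃ₜ X) x)
    have h2 : ((g : X ≃ₜ X) (((g⁻¹ : G) : X ≃ₜ X) x)) = x := by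
      have : ((g⁻¹ : G) : X ≃ₜ X) = (g : X ≃ₜ X).symm := rfl
      rw [this]; exact (g : X ≃ₜ X).apply_symm_apply x
    have h3 : ((g₀⁻¹ : G) : X ≃ₜ X) = (g₀ : X ≃ₜ X).symm := rfl
    have := h1
    rw [h2] at this
    have h4 := this  -- (x, g₀ (g⁻¹ x)) ∈ W₁
    simp only [hW₁def, Set.mem_preimage] at h4
    -- h4 : (g₀⁻¹ x, g₀⁻¹ (g₀ (g⁻¹ x))) ∈ V
    have h5 : ((g₀⁻¹ : G) : X ≃ₜ X) ((g₀ : X ≃ₜ X) (((g⁻¹ : G) : X ≃ₜ X) x))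
        = ((g⁻¹ : G) : X ≃ₜ X) x := by
      rw [h3]; exact (g₀ : X ≃ₜ X).symm_apply_apply _
    rw [h5] at h4
    exact h4
  exact { continuous_mul := hmul, continuous_inv := hinv }
end

section
/- Let a topological group G act continuously on a space X and let H be a dense subgroup of G. Then for every point x ∈ X, the action of G is d-open at x if and only if the restricted action of H is d-open at x; in particular the set of points where the G-action is d-open coincides with the set of points where the H-action is d-open. -/
open Topology

universe u

theorem dOpen_at_iff_aux
    {G X : Type u} [Group G] [TopologicalSpace G] [IsTopologicalGroup G]
    [TopologicalSpace X] [MulAction G X] [ContinuousSMul G X]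
    (H : Subgroup G) (hH : Dense (H : Set G)) (x : X) :
    (∀ O ∈ 𝓝 (1 : G), x ∈ interior (closure ((fun g : G => g • x) '' O))) ↔
      (∀ O ∈ 𝓝 (1 : H), x ∈ interior (closure ((fun h : H => (h : G) • x) '' O))) := by
  constructor
  · -- G d-open at x → H d-open at x
    intro hG O hO
    rw [nhds_induced] at hO
    obtain ⟨U, hU, hUO⟩ := hO
    have hV : interior U ∈ 𝓝 (1 : G) := interior_mem_nhds.2 hU
    have key : (fun g : G => g • x) '' interior U ⊆
        closure ((fun h : H => (h : G) • x) '' O) := by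
      rintro _ ⟨g, hg, rfl⟩
      rw [mem_closure_iff]
      intro s hs hgs
      have hcont : Continuous fun g : G => g • x := continuous_id.smul continuous_const
      have ht : IsOpen ((fun g : G => g • x) ⁻¹' s ∩ interior U) :=
        (hs.preimage hcont).inter isOpen_interior
      have hne : (((fun g : G => g • x) ⁻¹' s ∩ interior U) ∩ (H : Set G)).Nonempty :=
        hH.inter_open_nonempty _ ht ⟨g, hgs, hg⟩
      obtain ⟨h, ⟨hhs, hhU⟩, hhH⟩ := hne
      have hhO : (⟨h, hhH⟩ : H) ∈ O := hUO (show ((⟨h, hhH⟩ : H) : G) ∈ U from interior_subset hhU)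
      exact ⟨h • x, hhs, ⟨⟨h, hhH⟩, hhO, rfl⟩⟩
    have := hG (interior U) hV
    exact interior_mono (closure_minimal key isClosed_closure) this
  · -- H d-open at x → G d-open at x
    intro hHd O hO
    have hO' : (Subtype.val ⁻¹' O : Set H) ∈ 𝓝 (1 : H) :=
      (continuous_subtype_val.tendsto (1 : H)) hO
    have := hHd _ hO'
    refine interior_mono (closure_mono ?_) this
    rintro _ ⟨h, hh, rfl⟩
    exact ⟨(h : G), hh, rfl⟩

/-- Let a topological group `G` act continuously on `X` and let `H` be a
dense subgroup of `G`.  Then for every `x ∈ X` the `G`-action is d-open at `x` iff the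
restricted `H`-action is d-open at `x`; in particular the sets of points of d-openness
coincide. -/
theorem dOpen_iff_dOpen_of_dense_subgroup
    {G X : Type u} [Group G] [TopologicalSpace G] [IsTopologicalGroup G]
    [TopologicalSpace X] [MulAction G X] [ContinuousSMul G X]
    (H : Subgroup G) (hH : Dense (H : Set G)) :
    (∀ x : X,
      (∀ O ∈ 𝓝 (1 : G), x ∈ interior (closure ((fun g : G => g • x) '' O))) ↔
      (∀ O ∈ 𝓝 (1 : H), x ∈ interior (closure ((fun h : H => (h : G) • x) '' O)))) ∧
    {x : X | ∀ O ∈ 𝓝 (1 : G), x ∈ interior (closure ((fun g : G => g • x) '' O))} =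
    {x : X | ∀ O ∈ 𝓝 (1 : H), x ∈ interior (closure ((fun h : H => (h : G) • x) '' O))} := by
  refine ⟨fun x => dOpen_at_iff_aux H hH x, Set.ext fun x => dOpen_at_iff_aux H hH x⟩
end

section
/- Let a topological group G act continuously and d-openly on a space X, and let Y be a dense subset of X. Then for every neighborhood O of the identity of G, the family {interior(closure(O•y)) : y ∈ Y} is a cover of X. -/
open Topology

universe u

/-- Let a topological group `G` act continuously and d-openly on `X` and
let `Y` be a dense subset of `X`.  Then for every neighborhood `O` of the identity, the
family `{interior (closure (O • y)) : y ∈ Y}` covers `X`. -/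
theorem cover_of_dOpen_action_of_dense
    {G X : Type u} [Group G] [TopologicalSpace G] [IsTopologicalGroup G]
    [TopologicalSpace X] [MulAction G X] [ContinuousSMul G X]
    (hdopen : ∀ x : X, ∀ O ∈ 𝓝 (1 : G),
      x ∈ interior (closure ((fun g : G => g • x) '' O)))
    (Y : Set X) (hY : Dense Y) :
    ∀ O ∈ 𝓝 (1 : G),
      (⋃ y ∈ Y, interior (closure ((fun g : G => g • y) '' O))) = Set.univ := by
  intro O hO
  -- choose W with h * g⁻¹ * k ∈ O for all h, g, k ∈ W
  obtain ⟨V, hV, hVmul⟩ := exists_nhds_one_split hO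
  obtain ⟨W0, hW0, hW0mul⟩ := exists_nhds_one_split hV
  have h1W0 : (1 : G) ∈ W0 := mem_of_mem_nhds hW0
  set W : Set G := W0 ∩ W0⁻¹ with hWdef
  have hW : W ∈ 𝓝 (1 : G) := Filter.inter_mem hW0 (by simpa using inv_mem_nhds_one G hW0)
  have hWO : ∀ h ∈ W, ∀ g ∈ W, ∀ k ∈ W, h * g⁻¹ * k ∈ O := by
    intro h hh g hg k hk
    have hgi : g⁻¹ ∈ W0 := hg.2
    have hhg : h * g⁻¹ ∈ V := hW0mul h hh.1 g⁻¹ hgi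
    have hkV : k ∈ V := by simpa using hW0mul k hk.1 1 h1W0
    exact hVmul _ hhg _ hkV
  ext x
  simp only [Set.mem_iUnion, Set.mem_univ, iff_true]
  -- x lies in the open set U = interior (closure (W • x))
  have hxU := hdopen x W hW
  obtain ⟨y, hyY, hyU⟩ := hY.exists_mem_open isOpen_interior ⟨x, hxU⟩
  refine ⟨y, hyY, ?_⟩
  have hyCl : y ∈ closure ((fun g : G => g • x) '' W) := interior_subset hyU
  -- interior (closure (W • y)) is an open neighborhood of y, so it meets W • x
  have hyM : y ∈ interior (closure ((fun g : G => g • y) '' W)) := hdopen y W hW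
  obtain ⟨p, hpM, hpW⟩ := mem_closure_iff.mp hyCl _ isOpen_interior hyM
  obtain ⟨g, hgW, rfl⟩ := hpW
  have hgCl : g • x ∈ closure ((fun k : G => k • y) '' W) := interior_subset hpM
  -- every h • x with h ∈ W belongs to closure (O • y)
  have key : ∀ h ∈ W, h • x ∈ closure ((fun k : G => k • y) '' O) := by
    intro h hh
    have hcont : Continuous fun z : X => (h * g⁻¹) • z := continuous_const_smul _
    have h1 : (h * g⁻¹) • (g • x) ∈
        (fun z : X => (h * g⁻¹) • z) '' closure ((fun k : G => k • y) '' W) :=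
      ⟨g • x, hgCl, rfl⟩
    have h2 := image_closure_subset_closure_image hcont h1
    have h3 : (fun z : X => (h * g⁻¹) • z) '' ((fun k : G => k • y) '' W) ⊆
        (fun k : G => k • y) '' O := by
      rintro _ ⟨_, ⟨k, hkW, rfl⟩, rfl⟩
      exact ⟨h * g⁻¹ * k, hWO h hh g hgW k hkW, by simp [mul_smul]⟩
    have h4 : (h * g⁻¹) • (g • x) ∈ closure ((fun k : G => k • y) '' O) :=
      closure_mono h3 h2
    have : (h * g⁻¹) • (g • x) = h • x := by
      rw [smul_smul]; congr 1; group
    rwa [this] at h4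
  have hsub : closure ((fun g : G => g • x) '' W) ⊆ closure ((fun k : G => k • y) '' O) := by
    apply closure_minimal _ isClosed_closure
    rintro _ ⟨h, hh, rfl⟩
    exact key h hh
  exact interior_mono hsub hxU
end

section
/- Let τ be an infinite cardinal, let G be a topological group with #G ≤ τ, and let O be a family of neighborhoods of the identity of G with #O ≤ τ. Then there exists a family B of neighborhoods of the identity with #B ≤ τ such that: every member of O contains some member of B; the intersection of any two members of B contains a member of B (so B is a filter basis); every B ∈ B is symmetric (B = B⁻¹); for every B ∈ B there is V ∈ B with V·V ⊆ B; and for every B ∈ B and every g ∈ G there is V ∈ B with g·V·g⁻¹ ⊆ B. -/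
open Topology Pointwise Cardinal

universe u

/-- Let `τ` be an infinite cardinal, `G` a topological group with
`#G ≤ τ` and `O` a family of at most `τ` neighborhoods of the identity.  Then there is a
family `B` of at most `τ` neighborhoods of the identity such that: every member of `O`
contains a member of `B`; `B` is a filter basis; every member of `B` is symmetric; every
member of `B` contains the square of some member of `B`; and `B` is stable (in the
refinement sense) under conjugation by elements of `G`. -/
theorem exists_invariant_filter_basis
    {G : Type u} [Group G] [TopologicalSpace G] [IsTopologicalGroup G]
    (τ : Cardinal.{u}) (hτ : Cardinal.aleph0 ≤ τ) (hG : #G ≤ τ)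
    (O : Set (Set G)) (hO : ∀ o ∈ O, o ∈ 𝓝 (1 : G)) (hOcard : #O ≤ τ) :
    ∃ B : Set (Set G), #B ≤ τ ∧
      (∀ b ∈ B, b ∈ 𝓝 (1 : G)) ∧
      (∀ o ∈ O, ∃ b ∈ B, b ⊆ o) ∧
      (∀ b₁ ∈ B, ∀ b₂ ∈ B, ∃ b ∈ B, b ⊆ b₁ ∩ b₂) ∧
      (∀ b ∈ B, b = b⁻¹) ∧
      (∀ b ∈ B, ∃ v ∈ B, v * v ⊆ b) ∧
      (∀ b ∈ B, ∀ g : G, ∃ v ∈ B, (fun h : G => g * h * g⁻¹) '' v ⊆ b) := by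
  classical
  -- the shrinking function
  have hchoice : ∀ b : Set G, ∃ v : Set G,
      b ∈ 𝓝 (1 : G) → v ∈ 𝓝 (1 : G) ∧ v = v⁻¹ ∧ v * v ⊆ b := by
    intro b
    by_cases hb : b ∈ 𝓝 (1 : G)
    · obtain ⟨V, hV, hVmul⟩ := exists_nhds_one_split hb
      refine ⟨V ∩ V⁻¹, fun _ => ⟨Filter.inter_mem hV (inv_mem_nhds_one G hV), ?_, ?_⟩⟩
      · rw [Set.inter_inv, inv_inv, Set.inter_comm]
      · rw [Set.mul_subset_iff]
        intro x hx y hy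
        exact hVmul x hx.1 y hy.1
    · exact ⟨∅, fun h => absurd h hb⟩
  choose f hf using hchoice
  -- the conjugation function
  set c : G → Set G → Set G := fun g b => (fun h : G => g * h * g⁻¹) ⁻¹' b with hc
  have hconj_cont : ∀ g : G, Continuous fun h : G => g * h * g⁻¹ := by
    intro g; fun_prop
  have hc_nhds : ∀ (g : G) (b : Set G), b ∈ 𝓝 (1 : G) → c g b ∈ 𝓝 (1 : G) := by
    intro g b hb
    refine (hconj_cont g).continuousAt.preimage_mem_nhds ?_
    simpa using hb
  have hc_symm : ∀ (g : G) (b : Set G), b = b⁻¹ → c g b = (c g b)⁻¹ := by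
    intro g b hb
    have hinv : ∀ y : G, y ∈ b → y⁻¹ ∈ b := fun y hy => by
      rw [hb, Set.mem_inv, inv_inv]; exact hy
    ext x
    simp only [hc, Set.mem_inv, Set.mem_preimage]
    constructor
    · intro h
      have := hinv _ h
      simpa [mul_inv_rev, mul_assoc] using this
    · intro h
      have := hinv _ h
      simpa [mul_inv_rev, mul_assoc] using this
  -- the stages
  let S : ℕ → Set (Set G) := fun n => Nat.rec (f '' O)
    (fun _ T => ((T ∪ f '' T) ∪ Set.image2 (· ∩ ·) T T) ∪ Set.image2 c Set.univ T) n
  have hSsucc : ∀ n, S (n + 1)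
      = ((S n ∪ f '' S n) ∪ Set.image2 (· ∩ ·) (S n) (S n)) ∪ Set.image2 c Set.univ (S n) :=
    fun n => rfl
  have hmono : ∀ n, S n ⊆ S (n + 1) := by
    intro n b hb
    rw [hSsucc]
    exact Or.inl (Or.inl (Or.inl hb))
  have hmono' : ∀ m n, m ≤ n → S m ⊆ S n := by
    intro m n h
    induction h with
    | refl => exact subset_rfl
    | step _ ih => exact ih.trans (hmono _)
  -- basic properties of all stages
  have hbasic : ∀ n, ∀ b ∈ S n, b ∈ 𝓝 (1 : G) ∧ b = b⁻¹ := by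
    intro n
    induction n with
    | zero =>
      rintro b ⟨o, ho, rfl⟩
      obtain ⟨h1, h2, _⟩ := hf o (hO o ho)
      exact ⟨h1, h2⟩
    | succ n ih =>
      intro b hb
      rw [hSsucc] at hb
      rcases hb with ((hb | hb) | hb) | hb
      · exact ih b hb
      · obtain ⟨a, ha, rfl⟩ := hb
        obtain ⟨h1, h2, _⟩ := hf a (ih a ha).1
        exact ⟨h1, h2⟩
      · obtain ⟨a, ha, a', ha', rfl⟩ := hb
        obtain ⟨ha1, ha2⟩ := ih a ha
        obtain ⟨ha1', ha2'⟩ := ih a' ha'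
        refine ⟨Filter.inter_mem ha1 ha1', ?_⟩
        rw [Set.inter_inv, ← ha2, ← ha2']
      · obtain ⟨g, -, a, ha, rfl⟩ := hb
        obtain ⟨ha1, ha2⟩ := ih a ha
        exact ⟨hc_nhds g a ha1, hc_symm g a ha2⟩
  refine ⟨⋃ n : ℕ, S n, ?_, ?_, ?_, ?_, ?_, ?_, ?_⟩
  · -- cardinality
    have hcard : ∀ n, #↥(S n) ≤ τ := by
      intro n
      induction n with
      | zero => exact Cardinal.mk_image_le.trans hOcard
      | succ n ih =>
        rw [hSsucc]
        refine (Cardinal.mk_union_le _ _).trans ?_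
        have h1 : #(Set.image2 c Set.univ (S n)) ≤ τ := by
          refine Cardinal.mk_image2_le.trans ?_
          rw [Cardinal.mk_univ]
          calc #G * #↥(S n) ≤ τ * τ := mul_le_mul' hG ih
            _ = τ := Cardinal.mul_eq_self hτ
        have h2 : #((S n ∪ f '' S n) ∪ Set.image2 (· ∩ ·) (S n) (S n) : Set (Set G)) ≤ τ := by
          refine (Cardinal.mk_union_le _ _).trans ?_
          have h3 : #(Set.image2 (· ∩ ·) (S n) (S n)) ≤ τ := by
            refine Cardinal.mk_image2_le.trans ?_
            calc #↥(S n) * #↥(S n) ≤ τ * τ := mul_le_mul' ih ih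
              _ = τ := Cardinal.mul_eq_self hτ
          have h4 : #(S n ∪ f '' S n : Set (Set G)) ≤ τ :=
            (Cardinal.mk_union_le _ _).trans
              (Cardinal.add_le_of_le hτ ih (Cardinal.mk_image_le.trans ih))
          exact Cardinal.add_le_of_le hτ h4 h3
        exact Cardinal.add_le_of_le hτ h2 h1
    have : (⋃ n : ℕ, S n) = ⋃ m : ULift.{u} ℕ, S m.down := by
      ext x; simp [ULift.exists]
    rw [this]
    refine (Cardinal.mk_iUnion_le _).trans ?_
    have : #(ULift.{u} ℕ) = Cardinal.aleph0 := Cardinal.mk_denumerable _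
    rw [this]
    calc Cardinal.aleph0 * ⨆ m : ULift.{u} ℕ, #↥(S m.down)
        ≤ τ * τ := mul_le_mul' hτ (ciSup_le' fun m => hcard m.down)
      _ = τ := Cardinal.mul_eq_self hτ
  · rintro b hb
    obtain ⟨n, hn⟩ := Set.mem_iUnion.1 hb
    exact (hbasic n b hn).1
  · intro o ho
    refine ⟨f o, Set.mem_iUnion.2 ⟨0, ⟨o, ho, rfl⟩⟩, ?_⟩
    obtain ⟨h1, _, h3⟩ := hf o (hO o ho)
    intro x hx
    have : x * 1 ∈ f o * f o := Set.mul_mem_mul hx (mem_of_mem_nhds h1)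
    simpa using h3 this
  · intro b₁ hb₁ b₂ hb₂
    obtain ⟨n, hn⟩ := Set.mem_iUnion.1 hb₁
    obtain ⟨m, hm⟩ := Set.mem_iUnion.1 hb₂
    refine ⟨b₁ ∩ b₂, Set.mem_iUnion.2 ⟨max n m + 1, ?_⟩, subset_rfl⟩
    rw [hSsucc]
    exact Or.inl (Or.inr (Set.mem_image2_of_mem (hmono' n _ (le_max_left n m) hn)
      (hmono' m _ (le_max_right n m) hm)))
  · rintro b hb
    obtain ⟨n, hn⟩ := Set.mem_iUnion.1 hb
    exact (hbasic n b hn).2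
  · intro b hb
    obtain ⟨n, hn⟩ := Set.mem_iUnion.1 hb
    refine ⟨f b, Set.mem_iUnion.2 ⟨n + 1, ?_⟩, (hf b (hbasic n b hn).1).2.2⟩
    rw [hSsucc]
    exact Or.inl (Or.inl (Or.inr ⟨b, hn, rfl⟩))
  · intro b hb g
    obtain ⟨n, hn⟩ := Set.mem_iUnion.1 hb
    refine ⟨c g b, Set.mem_iUnion.2 ⟨n + 1, ?_⟩, ?_⟩
    · rw [hSsucc]
      exact Or.inr (Set.mem_image2_of_mem (Set.mem_univ g) hn)
    · exact Set.image_preimage_subset _ _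
end

section
/- Let a topological group G act continuously and d-openly on a topological space X, and let κ be an infinite cardinal such that the topology of X has a basis of cardinality at most κ. Then there exist a topological group H with #H ≤ κ whose topology has a basis of cardinality at most κ, and a continuous d-open action of H on X. -/
open Topology TopologicalSpace Cardinal Set Pointwise
set_option linter.unusedSectionVars false
set_option maxHeartbeats 1000000

universe u

lemma card_subgroup_closure_le {G : Type u} [Group G] (s : Set G) {κ : Cardinal.{u}}
    (hκ : Cardinal.aleph0 ≤ κ) (hs : #s ≤ κ) : #(Subgroup.closure s) ≤ κ := by
  have key : (Subgroup.closure s : Set G) ⊆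
      Set.range (fun l : List ↥(s ∪ s⁻¹) => ((l.map Subtype.val).prod : G)) := by
    intro x hx
    have hx' : x ∈ Submonoid.closure (s ∪ s⁻¹) := by
      rw [← Subgroup.closure_toSubmonoid] at *; exact hx
    obtain ⟨l, hl, rfl⟩ := Submonoid.exists_list_of_mem_closure hx'
    refine ⟨l.pmap (fun y h => (⟨y, h⟩ : ↥(s ∪ s⁻¹))) hl, ?_⟩
    simp [List.map_pmap, List.pmap_eq_map]
  have h1 : #(Subgroup.closure s) ≤ #(List ↥(s ∪ s⁻¹)) := by
    calc #(Subgroup.closure s) ≤ #(Set.range (fun l : List ↥(s ∪ s⁻¹) =>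
        ((l.map Subtype.val).prod : G))) := Cardinal.mk_le_mk_of_subset key
    _ ≤ #(List ↥(s ∪ s⁻¹)) := Cardinal.mk_range_le
  have h2 : #(↥(s ∪ s⁻¹)) ≤ κ := by
    have : #(↥(s⁻¹ : Set G)) = #s := by
      rw [← Set.image_inv_eq_inv]
      exact Cardinal.mk_image_eq inv_injective
    calc #(↥(s ∪ s⁻¹)) ≤ #s + #(↥(s⁻¹ : Set G)) := Cardinal.mk_union_le _ _
    _ ≤ κ + κ := by rw [this]; exact add_le_add hs hs
    _ = κ := Cardinal.add_eq_self hκ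
  calc #(Subgroup.closure s) ≤ #(List ↥(s ∪ s⁻¹)) := h1
  _ ≤ max ℵ₀ #(↥(s ∪ s⁻¹)) := Cardinal.mk_list_le_max _
  _ ≤ κ := max_le hκ h2

lemma mk_set_prod {A B : Type u} (s : Set A) (t : Set B) : #(↥(s ×ˢ t)) = #s * #t := by
  rw [Cardinal.mk_congr (Equiv.Set.prod s t), Cardinal.mk_prod, Cardinal.lift_id, Cardinal.lift_id]

section Aux

variable {G X : Type u} [Group G] [TopologicalSpace G] [IsTopologicalGroup G]
    [TopologicalSpace X] [MulAction G X] [ContinuousSMul G X]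

lemma exists_symm_nhds {U : Set G} (h : U ∈ 𝓝 (1 : G)) :
    ∃ V ∈ 𝓝 (1 : G), V * V ⊆ U ∧ V⁻¹ = V := by
  obtain ⟨V₀, hV₀, hV₀U⟩ := exists_nhds_one_split h
  refine ⟨V₀ ∩ V₀⁻¹, Filter.inter_mem hV₀ ?_, ?_, by ext x; simp [and_comm]⟩
  · exact inv_mem_nhds_one G hV₀
  · rintro x ⟨a, ⟨ha, _⟩, b, ⟨hb, _⟩, rfl⟩
    exact hV₀U a ha b hb

open scoped Classical in
/-- A symmetric neighborhood `V` of `1` with `V * V ⊆ U`. -/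
noncomputable def symmW (U : Set G) : Set G :=
  if h : U ∈ 𝓝 (1 : G) then (exists_symm_nhds h).choose else Set.univ

open scoped Classical in
lemma symmW_mem_nhds {U : Set G} (h : U ∈ 𝓝 (1 : G)) : symmW U ∈ 𝓝 (1 : G) := by
  rw [symmW, dif_pos h]; exact (exists_symm_nhds h).choose_spec.1

open scoped Classical in
lemma symmW_mul {U : Set G} (h : U ∈ 𝓝 (1 : G)) : symmW U * symmW U ⊆ U := by
  rw [symmW, dif_pos h]; exact (exists_symm_nhds h).choose_spec.2.1

open scoped Classical in
lemma symmW_inv {U : Set G} (h : U ∈ 𝓝 (1 : G)) : (symmW U)⁻¹ = symmW U := by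
  rw [symmW, dif_pos h]; exact (exists_symm_nhds h).choose_spec.2.2

lemma symmW_subset {U : Set G} (h : U ∈ 𝓝 (1 : G)) : symmW U ⊆ U := by
  intro x hx
  have h1 : (1 : G) ∈ symmW U := mem_of_mem_nhds (symmW_mem_nhds h)
  exact symmW_mul h ⟨x, hx, 1, h1, mul_one x⟩

/-- Conjugation witness. -/
def conjW (g : G) (U : Set G) : Set G := (fun x => g * x * g⁻¹) ⁻¹' U

lemma conjW_mem_nhds (g : G) {U : Set G} (h : U ∈ 𝓝 (1 : G)) : conjW g U ∈ 𝓝 (1 : G) := by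
  have hc : Continuous (fun x : G => g * x * g⁻¹) := by continuity
  have := hc.continuousAt (x := (1 : G))
  unfold ContinuousAt at this
  simpa [conjW] using this (by simpa using h)

lemma conjW_spec (g : G) {U : Set G} {v : G} (hv : v ∈ conjW g U) : g * v * g⁻¹ ∈ U := hv

open scoped Classical in
/-- Action continuity witness: a neighborhood `O` of `1` with `(h*O) • W ⊆ V`, if one exists. -/
noncomputable def actW (h : G) (W V : Set X) : Set G :=
  if c : ∃ O ∈ 𝓝 (1 : G), ∀ g ∈ O, ∀ y ∈ W, (h * g) • y ∈ V then c.choose else Set.univ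

open scoped Classical in
lemma actW_mem_nhds (h : G) (W V : Set X) : actW h W V ∈ 𝓝 (1 : G) := by
  rw [actW]; split
  · next c => exact c.choose_spec.1
  · exact Filter.univ_mem

open scoped Classical in
lemma actW_spec {h : G} {W V : Set X}
    (c : ∃ O ∈ 𝓝 (1 : G), ∀ g ∈ O, ∀ y ∈ W, (h * g) • y ∈ V) :
    ∀ g ∈ actW h W V, ∀ y ∈ W, (h * g) • y ∈ V := by
  rw [actW, dif_pos c]; exact c.choose_spec.2

open scoped Classical in
/-- d-openness witness selector. -/
noncomputable def chiW (U : Set G) (W' B : Set X) : G :=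
  if c : ∃ g, g ∈ U ∧ ∀ y ∈ B, g • y ∈ W' then c.choose else 1

open scoped Classical in
lemma chiW_spec {U : Set G} {W' B : Set X} (c : ∃ g, g ∈ U ∧ ∀ y ∈ B, g • y ∈ W') :
    chiW U W' B ∈ U ∧ ∀ y ∈ B, (chiW (X := X) U W' B) • y ∈ W' := by
  rw [chiW, dif_pos c]; exact c.choose_spec


noncomputable def stage (S : Set (Set X)) : ℕ → Set G × Set (Set G)
  | 0 => (∅, {Set.univ})
  | n + 1 =>
    let E := (stage S n).1
    let F := (stage S n).2
    let Hn : Set G := ↑(Subgroup.closure E)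
    (E ∪ (fun p : Set G × Set X × Set X => chiW p.1 p.2.1 p.2.2) '' (F ×ˢ S ×ˢ S),
     F ∪ (fun p : Set G × Set G => p.1 ∩ p.2) '' (F ×ˢ F) ∪ symmW '' F ∪
       (fun p : G × Set G => conjW p.1 p.2) '' (Hn ×ˢ F) ∪
       (fun p : G × Set X × Set X => actW p.1 p.2.1 p.2.2) '' (Hn ×ˢ S ×ˢ S))

variable (S : Set (Set X))

lemma stage_fst_mono : Monotone (fun n => (stage (G := G) S n).1) := by
  apply monotone_nat_of_le_succ
  intro n
  rw [stage]
  exact Set.subset_union_left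

lemma stage_snd_mono : Monotone (fun n => (stage (G := G) S n).2) := by
  apply monotone_nat_of_le_succ
  intro n
  rw [stage]
  intro U hU
  exact Or.inl (Or.inl (Or.inl (Or.inl hU)))

lemma univ_mem_stage (n : ℕ) : Set.univ ∈ (stage (G := G) S n).2 :=
  stage_snd_mono S (Nat.zero_le n) (by show _ ∈ (stage S 0).2; rw [stage]; simp)

lemma stage_snd_nhds : ∀ n, ∀ U ∈ (stage (G := G) S n).2, U ∈ 𝓝 (1 : G) := by
  intro n
  induction n with
  | zero => intro U hU; rw [stage] at hU; simp at hU; simp [hU]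
  | succ n ih =>
    intro U hU
    rw [stage] at hU
    rcases hU with ((((hU | hU) | hU) | hU) | hU)
    · exact ih U hU
    · obtain ⟨⟨V, W⟩, ⟨hV, hW⟩, rfl⟩ := hU
      exact Filter.inter_mem (ih V hV) (ih W hW)
    · obtain ⟨V, hV, rfl⟩ := hU
      exact symmW_mem_nhds (ih V hV)
    · obtain ⟨⟨g, V⟩, ⟨_, hV⟩, rfl⟩ := hU
      exact conjW_mem_nhds g (ih V hV)
    · obtain ⟨⟨g, W, V⟩, _, rfl⟩ := hU
      exact actW_mem_nhds g W V

/-- The collection of neighbourhoods produced by the recursion. -/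
def UU : Set (Set G) := ⋃ n, (stage (G := G) (X := X) S n).2

/-- The subgroup produced by the recursion. -/
def Hsub : Subgroup G := Subgroup.closure (⋃ n, (stage (G := G) (X := X) S n).1)

lemma UU_nhds {U : Set G} (hU : U ∈ UU (G := G) S) : U ∈ 𝓝 (1 : G) := by
  obtain ⟨_, ⟨n, rfl⟩, hU⟩ := hU
  exact stage_snd_nhds S n U hU

lemma univ_mem_UU : Set.univ ∈ UU (G := G) (X := X) S :=
  Set.mem_iUnion.2 ⟨0, univ_mem_stage S 0⟩

lemma UU_inter {U V : Set G} (hU : U ∈ UU (X := X) S) (hV : V ∈ UU (X := X) S) :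
    U ∩ V ∈ UU (X := X) S := by
  obtain ⟨_, ⟨n, rfl⟩, hU⟩ := hU
  obtain ⟨_, ⟨m, rfl⟩, hV⟩ := hV
  refine Set.mem_iUnion.2 ⟨max n m + 1, ?_⟩
  rw [stage]
  refine Or.inl (Or.inl (Or.inl (Or.inr ⟨(U, V), ⟨?_, ?_⟩, rfl⟩)))
  · exact stage_snd_mono S (le_max_left n m) hU
  · exact stage_snd_mono S (le_max_right n m) hV

lemma UU_symmW {U : Set G} (hU : U ∈ UU (X := X) S) : symmW U ∈ UU (X := X) S := by
  obtain ⟨_, ⟨n, rfl⟩, hU⟩ := hU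
  refine Set.mem_iUnion.2 ⟨n + 1, ?_⟩
  rw [stage]
  exact Or.inl (Or.inl (Or.inr ⟨U, hU, rfl⟩))

lemma mem_Hsub_iff {g : G} :
    g ∈ Hsub (G := G) (X := X) S ↔ ∃ n, g ∈ Subgroup.closure (stage (G := G) (X := X) S n).1 := by
  have hdir : Directed (· ≤ ·) (fun n => Subgroup.closure (stage (G := G) (X := X) S n).1) :=
    fun m n => ⟨max m n, Subgroup.closure_mono (stage_fst_mono S (le_max_left m n)),
      Subgroup.closure_mono (stage_fst_mono S (le_max_right m n))⟩
  rw [Hsub, Subgroup.closure_iUnion]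
  exact Subgroup.mem_iSup_of_directed hdir

lemma UU_conjW {g : G} {U : Set G} (hg : g ∈ Hsub (X := X) S) (hU : U ∈ UU (X := X) S) :
    conjW g U ∈ UU (X := X) S := by
  obtain ⟨n, hn⟩ := (mem_Hsub_iff S).1 hg
  obtain ⟨_, ⟨m, rfl⟩, hU⟩ := hU
  refine Set.mem_iUnion.2 ⟨max n m + 1, ?_⟩
  rw [stage]
  refine Or.inl (Or.inr ⟨(g, U), ⟨?_, ?_⟩, rfl⟩)
  · exact Subgroup.closure_mono (stage_fst_mono S (le_max_left n m)) hn
  · exact stage_snd_mono S (le_max_right n m) hU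

lemma UU_actW {g : G} {W V : Set X} (hg : g ∈ Hsub (X := X) S) (hW : W ∈ S) (hV : V ∈ S) :
    actW g W V ∈ UU (X := X) S := by
  obtain ⟨n, hn⟩ := (mem_Hsub_iff S).1 hg
  refine Set.mem_iUnion.2 ⟨n + 1, ?_⟩
  rw [stage]
  exact Or.inr ⟨(g, W, V), ⟨hn, hW, hV⟩, rfl⟩

lemma Hsub_chiW {U : Set G} {W' B : Set X} (hU : U ∈ UU (X := X) S) (hW' : W' ∈ S) (hB : B ∈ S) :
    chiW U W' B ∈ Hsub (X := X) S := by
  obtain ⟨_, ⟨n, rfl⟩, hU⟩ := hU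
  apply Subgroup.subset_closure
  refine Set.mem_iUnion.2 ⟨n + 1, ?_⟩
  rw [stage]
  exact Or.inr ⟨(U, W', B), ⟨hU, hW', hB⟩, rfl⟩

lemma stage_card {κ : Cardinal.{u}} (hκ : Cardinal.aleph0 ≤ κ) (hS : #S ≤ κ) :
    ∀ n, #(stage (G := G) (X := X) S n).1 ≤ κ ∧ #(stage (G := G) (X := X) S n).2 ≤ κ := by
  have hmul : ∀ {a b : Cardinal.{u}}, a ≤ κ → b ≤ κ → a * b ≤ κ := fun ha hb =>
    (mul_le_mul' ha hb).trans (le_of_eq (Cardinal.mul_eq_self hκ))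
  have hadd : ∀ {a b : Cardinal.{u}}, a ≤ κ → b ≤ κ → a + b ≤ κ := fun ha hb =>
    (add_le_add ha hb).trans (le_of_eq (Cardinal.add_eq_self hκ))
  have himg : ∀ {A B C : Type u} (f : A × B × C → G ⊕ Set G) {sa : Set A} {sb : Set B}
      {sc : Set C}, #sa ≤ κ → #sb ≤ κ → #sc ≤ κ → #(f '' (sa ×ˢ sb ×ˢ sc)) ≤ κ := by
    intro A B C f sa sb sc ha hb hc
    refine Cardinal.mk_image_le.trans ?_
    rw [mk_set_prod, mk_set_prod]
    exact hmul ha (hmul hb hc)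
  intro n
  induction n with
  | zero =>
    constructor
    · rw [stage]; simp
    · rw [stage]; simp
      exact Cardinal.one_le_aleph0.trans hκ
  | succ n ih =>
    obtain ⟨ih1, ih2⟩ := ih
    have hcl : #(Subgroup.closure (stage (G := G) (X := X) S n).1) ≤ κ :=
      card_subgroup_closure_le _ hκ ih1
    constructor
    · rw [stage]
      refine (Cardinal.mk_union_le _ _).trans (hadd ih1 ?_)
      exact himg (fun p => Sum.inl (chiW p.1 p.2.1 p.2.2)) ih2 hS hS |>.trans_eq' (by
        rw [← Cardinal.mk_image_eq (f := (Sum.inl : G → G ⊕ Set G)) Sum.inl_injective, Set.image_image])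
    · rw [stage]
      refine (Cardinal.mk_union_le _ _).trans (hadd ((Cardinal.mk_union_le _ _).trans
        (hadd ((Cardinal.mk_union_le _ _).trans (hadd ((Cardinal.mk_union_le _ _).trans
        (hadd ih2 ?_)) ?_)) ?_)) ?_)
      · refine Cardinal.mk_image_le.trans ?_
        rw [mk_set_prod]; exact hmul ih2 ih2
      · exact Cardinal.mk_image_le.trans ih2
      · refine Cardinal.mk_image_le.trans ?_
        rw [mk_set_prod]; exact hmul hcl ih2
      · exact himg (fun p => Sum.inr (actW p.1 p.2.1 p.2.2)) hcl hS hS |>.trans_eq' (by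
          rw [← Cardinal.mk_image_eq (f := (Sum.inr : Set G → G ⊕ Set G)) Sum.inr_injective, Set.image_image])

lemma UU_card {κ : Cardinal.{u}} (hκ : Cardinal.aleph0 ≤ κ) (hS : #S ≤ κ) :
    #(UU (G := G) S) ≤ κ := by
  rw [UU, ← Cardinal.lift_uzero #(⋃ n, (stage (G := G) (X := X) S n).2)]
  refine (Cardinal.mk_iUnion_le_lift _).trans ?_
  simp only [Cardinal.mk_nat, Cardinal.lift_aleph0]
  refine (mul_le_mul' hκ ?_).trans (le_of_eq (Cardinal.mul_eq_self hκ))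
  exact ciSup_le' fun n => (Cardinal.lift_uzero _).le.trans (stage_card S hκ hS n).2

lemma Hsub_card {κ : Cardinal.{u}} (hκ : Cardinal.aleph0 ≤ κ) (hS : #S ≤ κ) :
    #(Hsub (G := G) S) ≤ κ := by
  refine card_subgroup_closure_le _ hκ ?_
  rw [← Cardinal.lift_uzero #(⋃ n, (stage (G := G) (X := X) S n).1)]
  refine (Cardinal.mk_iUnion_le_lift _).trans ?_
  simp only [Cardinal.mk_nat, Cardinal.lift_aleph0]
  refine (mul_le_mul' hκ ?_).trans (le_of_eq (Cardinal.mul_eq_self hκ))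
  exact ciSup_le' fun n => (Cardinal.lift_uzero _).le.trans (stage_card S hκ hS n).1

end Aux

/-- Let a topological group `G` act continuously and d-openly on `X`, and
let `κ` be an infinite cardinal such that the topology of `X` has a basis of cardinality at
most `κ`.  Then there is a topological group `H` with `#H ≤ κ`, whose topology has a basis
of cardinality at most `κ`, together with a continuous d-open action of `H` on `X`. -/
theorem exists_small_group_with_dOpen_action
    {G X : Type u} [Group G] [TopologicalSpace G] [IsTopologicalGroup G]
    [TopologicalSpace X] [MulAction G X] [ContinuousSMul G X]
    (κ : Cardinal.{u}) (hκ : Cardinal.aleph0 ≤ κ)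
    (hbasis : ∃ S : Set (Set X), #S ≤ κ ∧ IsTopologicalBasis S)
    (hdopen : ∀ x : X, ∀ O ∈ 𝓝 (1 : G),
      x ∈ interior (closure ((fun g : G => g • x) '' O))) :
    ∃ (H : Type u) (_ : Group H) (_ : TopologicalSpace H) (_ : IsTopologicalGroup H)
      (_ : MulAction H X),
      ContinuousSMul H X ∧ #H ≤ κ ∧
      (∃ S : Set (Set H), #S ≤ κ ∧ IsTopologicalBasis S) ∧
      (∀ x : X, ∀ O ∈ 𝓝 (1 : H),
        x ∈ interior (closure ((fun h : H => h • x) '' O))) := by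
  classical
  obtain ⟨S, hScard, hSbasis⟩ := hbasis
  set Hs : Subgroup G := Hsub (G := G) S with hHs
  let H : Type u := ↥Hs
  have hnhds : ∀ U ∈ UU (G := G) S, U ∈ 𝓝 (1 : G) := fun U hU => UU_nhds S hU
  -- the group filter basis on H
  let B : GroupFilterBasis H :=
  { sets := (fun U : Set G => (Subtype.val ⁻¹' U : Set H)) '' UU (G := G) S
    nonempty := ⟨_, ⟨Set.univ, univ_mem_UU S, rfl⟩⟩
    inter_sets := by
      rintro _ _ ⟨U, hU, rfl⟩ ⟨V, hV, rfl⟩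
      exact ⟨_, ⟨U ∩ V, UU_inter S hU hV, rfl⟩, subset_of_eq (Set.preimage_inter)⟩
    one' := by
      rintro _ ⟨U, hU, rfl⟩
      show ((1 : H) : G) ∈ U
      simpa using mem_of_mem_nhds (hnhds U hU)
    mul' := by
      rintro _ ⟨U, hU, rfl⟩
      refine ⟨_, ⟨symmW U, UU_symmW S hU, rfl⟩, ?_⟩
      rintro x ⟨a, ha, b, hb, rfl⟩
      show ((a * b : H) : G) ∈ U
      rw [Subgroup.coe_mul]
      exact symmW_mul (hnhds U hU) ⟨(a : G), ha, (b : G), hb, rfl⟩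
    inv' := by
      rintro _ ⟨U, hU, rfl⟩
      refine ⟨_, ⟨symmW U, UU_symmW S hU, rfl⟩, ?_⟩
      intro v hv
      show ((v⁻¹ : H) : G) ∈ U
      rw [Subgroup.coe_inv]
      apply symmW_subset (hnhds U hU)
      rw [← symmW_inv (hnhds U hU)]
      exact Set.inv_mem_inv.2 hv
    conj' := by
      rintro x₀ _ ⟨U, hU, rfl⟩
      refine ⟨_, ⟨conjW (x₀ : G) U, UU_conjW S x₀.2 hU, rfl⟩, ?_⟩
      intro v hv
      show ((x₀ * v * x₀⁻¹ : H) : G) ∈ U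
      rw [Subgroup.coe_mul, Subgroup.coe_mul, Subgroup.coe_inv]
      exact conjW_spec (x₀ : G) hv }
  letI tH : TopologicalSpace H := B.topology
  haveI tgH : IsTopologicalGroup H := B.isTopologicalGroup
  letI mA : MulAction H X := MulAction.compHom X Hs.subtype
  have hsmul : ∀ (h : H) (x : X), h • x = (h : G) • x := fun _ _ => rfl
  refine ⟨H, inferInstance, tH, tgH, mA, ?_, ?_, ?_, ?_⟩
  · -- continuity of the action
    constructor
    rw [continuous_iff_continuousAt]
    rintro ⟨h, x⟩
    rw [ContinuousAt, Filter.tendsto_def]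
    intro s hs
    rw [hsmul] at hs
    obtain ⟨t, hts, htopen, hxt⟩ := mem_nhds_iff.1 hs
    obtain ⟨V', hV'S, hV'mem, hV'sub⟩ := hSbasis.exists_subset_of_mem_open hxt htopen
    have hGsmul : ContinuousAt (fun p : G × X => p.1 • p.2) ((h : G), x) :=
      continuous_smul.continuousAt
    have hpre : (fun p : G × X => p.1 • p.2) ⁻¹' V' ∈ 𝓝 ((h : G), x) :=
      hGsmul ((hSbasis.isOpen hV'S).mem_nhds hV'mem)
    rw [mem_nhds_prod_iff] at hpre
    obtain ⟨A, hA, Bx, hBx, hAB⟩ := hpre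
    obtain ⟨t', ht's, ht'open, hxt'⟩ := mem_nhds_iff.1 hBx
    obtain ⟨W, hWS, hxW, hWsub⟩ := hSbasis.exists_subset_of_mem_open hxt' ht'open
    have hO : (fun g : G => (h : G) * g) ⁻¹' A ∈ 𝓝 (1 : G) := by
      have hmc : Continuous (fun g : G => (h : G) * g) := continuous_mul_left _
      have := hmc.continuousAt (x := (1 : G))
      rw [ContinuousAt, mul_one] at this
      exact this hA
    have c : ∃ O ∈ 𝓝 (1 : G), ∀ g ∈ O, ∀ y ∈ W, ((h : G) * g) • y ∈ V' :=
      ⟨_, hO, fun g hg y hy => hAB (Set.mk_mem_prod hg (ht's (hWsub hy)))⟩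
    have hU : actW (h : G) W V' ∈ UU (G := G) S := UU_actW S h.2 hWS hV'S
    rw [nhds_prod_eq]
    have hmemnb : ((fun y => h * y) '' (Subtype.val ⁻¹' actW (h : G) W V') : Set H) ∈ 𝓝 h :=
      (B.nhds_hasBasis h).mem_of_mem ⟨_, hU, rfl⟩
    refine Filter.mem_of_superset
      (Filter.prod_mem_prod hmemnb ((hSbasis.isOpen hWS).mem_nhds hxW)) ?_
    rintro ⟨h', y⟩ ⟨⟨v, hv, rfl⟩, hyW⟩
    show (h * v) • y ∈ s
    rw [hsmul, Subgroup.coe_mul]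
    exact hts (hV'sub (actW_spec c (v : G) hv y hyW))
  · -- cardinality of H
    exact Hsub_card S hκ hScard
  · -- a small basis for H
    refine ⟨Set.range (fun p : H × ↥(UU (G := G) S) =>
      interior ((fun y => p.1 * y) '' (Subtype.val ⁻¹' (p.2 : Set G)))), ?_, ?_⟩
    · refine Cardinal.mk_range_le.trans ?_
      rw [Cardinal.mk_prod, Cardinal.lift_id, Cardinal.lift_id]
      exact (mul_le_mul' (Hsub_card S hκ hScard) (UU_card S hκ hScard)).trans
        (le_of_eq (Cardinal.mul_eq_self hκ))
    · refine isTopologicalBasis_of_isOpen_of_nhds ?_ ?_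
      · rintro _ ⟨p, rfl⟩; exact isOpen_interior
      · intro a O haO hOopen
        obtain ⟨V, ⟨U, hU, rfl⟩, hVO⟩ :=
          (B.nhds_hasBasis a).mem_iff.1 (hOopen.mem_nhds haO)
        refine ⟨interior ((fun y => a * y) '' (Subtype.val ⁻¹' U)), ⟨(a, ⟨U, hU⟩), rfl⟩, ?_, ?_⟩
        · rw [mem_interior_iff_mem_nhds]
          exact (B.nhds_hasBasis a).mem_of_mem ⟨U, hU, rfl⟩
        · exact interior_subset.trans hVO
  · -- d-openness
    intro x O hO
    obtain ⟨V, ⟨U, hU, rfl⟩, hVO⟩ := (B.nhds_one_hasBasis).mem_iff.1 hO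
    have hUnh : U ∈ 𝓝 (1 : G) := hnhds U hU
    have key := hdopen x U hUnh
    have claim : interior (closure ((fun g : G => g • x) '' U)) ⊆
        closure ((fun h : H => h • x) '' (Subtype.val ⁻¹' U)) := by
      intro y hy
      rw [mem_closure_iff]
      intro N hNopen hyN
      have hyint : y ∈ N ∩ interior (closure ((fun g : G => g • x) '' U)) := ⟨hyN, hy⟩
      obtain ⟨W', hW'S, hyW', hW'sub⟩ :=
        hSbasis.exists_subset_of_mem_open hyint (hNopen.inter isOpen_interior)
      have hyclos : y ∈ closure ((fun g : G => g • x) '' U) := interior_subset hy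
      obtain ⟨z, hzW', g, hgU, rfl⟩ :=
        mem_closure_iff.1 hyclos W' (hSbasis.isOpen hW'S) hyW'
      have hxpre : x ∈ (fun y' => g • y') ⁻¹' W' := hzW'
      have hpreopen : IsOpen ((fun y' : X => g • y') ⁻¹' W') :=
        (hSbasis.isOpen hW'S).preimage (continuous_const_smul g)
      obtain ⟨B', hB'S, hxB', hB'sub⟩ := hSbasis.exists_subset_of_mem_open hxpre hpreopen
      have c : ∃ g', g' ∈ U ∧ ∀ y' ∈ B', g' • y' ∈ W' := ⟨g, hgU, fun y' hy' => hB'sub hy'⟩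
      obtain ⟨hchiU, hchi⟩ := chiW_spec c
      have hchiH : chiW U W' B' ∈ Hs := Hsub_chiW S hU hW'S hB'S
      refine ⟨chiW U W' B' • x, (hW'sub (hchi x hxB')).1, ⟨⟨chiW U W' B', hchiH⟩, hchiU, ?_⟩⟩
      exact hsmul _ _
    have hmono : closure ((fun h : H => h • x) '' (Subtype.val ⁻¹' U)) ⊆
        closure ((fun h : H => h • x) '' O) :=
      closure_mono (Set.image_mono hVO)
    exact interior_maximal (claim.trans hmono) isOpen_interior key
end
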